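/- Conditional variance bound for the smoothing error of the score: under Assumption 1, define ξ̃_{i,k+1}(τ) = F_i(Y_{i,k}(τ)) − 1{X_{i,k+1} ≤ Y_{i,k}(τ)}. Then for every 1 ≤ i ≤ p, every τ ∈ [τ0, τ1] and every k ≥ 1, almost surely E[ (ξ̃_{i,k+1}(τ) − ξ_{i,k+1}(τ))² | F_{i,k} ] ≤ 4 c_f a γ_k. -/

import Mathlib

open MeasureTheory ProbabilityTheory Real

/-- The piecewise-linear smoothing of the indicator function. -/
noncomputable def gfun (x : ℝ) : ℝ :=
  if 1 ≤ x then 1 else if -1 ≤ x then (x + 1) / 2 else 0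

/-- Rescaled smoothing function `g_h(x) = g(x/h)`. -/
noncomputable def gsm (h x : ℝ) : ℝ := gfun (x / h)

/-- Learning rate `γ_k = c_γ k^{-β}`. -/
noncomputable def gam (cγ β : ℝ) (k : ℕ) : ℝ := cγ * (k : ℝ) ^ (-β)

/-- The σ-field generated by `X_1, …, X_k`. -/
def sigmaUpTo {Ω : Type} (X : ℕ → Ω → ℝ) (k : ℕ) : MeasurableSpace Ω :=
  ⨆ j ∈ Finset.Icc 1 k, MeasurableSpace.comap (X j) inferInstance

section Aux

lemma measurable_gfun : Measurable gfun := by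
  unfold gfun
  refine Measurable.ite (measurableSet_le measurable_const measurable_id) measurable_const ?_
  exact Measurable.ite (measurableSet_le measurable_const measurable_id)
    ((measurable_id.add_const 1).div_const 2) measurable_const

lemma gfun_nonneg (x : ℝ) : 0 ≤ gfun x := by
  unfold gfun
  split_ifs with h1 h2 <;> [norm_num; linarith; norm_num]

lemma gfun_le_one (x : ℝ) : gfun x ≤ 1 := by
  unfold gfun
  split_ifs with h1 h2 <;> [norm_num; linarith; norm_num]

lemma gfun_of_one_le {x : ℝ} (hx : 1 ≤ x) : gfun x = 1 := if_pos hx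

lemma gfun_of_lt_neg_one {x : ℝ} (hx : x < -1) : gfun x = 0 := by
  unfold gfun
  rw [if_neg (by linarith), if_neg (by linarith)]

lemma measurable_gsm (h : ℝ) : Measurable (gsm h) :=
  measurable_gfun.comp (measurable_id.div_const h)

lemma gsm_nonneg (h x : ℝ) : 0 ≤ gsm h x := gfun_nonneg _
lemma gsm_le_one (h x : ℝ) : gsm h x ≤ 1 := gfun_le_one _

lemma smoothing_diff_abs_le {h y x : ℝ} (hh : 0 < h) :
    |(if x ≤ y then (1:ℝ) else 0) - gsm h (y - x)| ≤
      Set.indicator (Set.Icc (y - h) (y + h)) (fun _ => (1:ℝ)) x := by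
  by_cases hx : x ∈ Set.Icc (y - h) (y + h)
  · rw [Set.indicator_of_mem hx]
    have h1 : (0:ℝ) ≤ if x ≤ y then (1:ℝ) else 0 := by positivity
    have h2 : (if x ≤ y then (1:ℝ) else 0) ≤ 1 := by split <;> norm_num
    have h3 := gsm_nonneg h (y - x)
    have h4 := gsm_le_one h (y - x)
    rw [abs_sub_le_iff]
    constructor <;> linarith
  · rw [Set.indicator_of_notMem hx]
    rw [Set.mem_Icc, not_and_or] at hx
    rcases hx with hx | hx
    · push_neg at hx
      have hxy : x ≤ y := by linarith
      have : (1:ℝ) ≤ (y - x) / h := (le_div_iff₀ hh).mpr (by linarith)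
      rw [if_pos hxy, gsm, gfun_of_one_le this]
      simp
    · push_neg at hx
      have hxy : ¬ x ≤ y := by push_neg; linarith
      have : (y - x) / h < -1 := by rw [div_lt_iff₀ hh]; linarith
      rw [if_neg hxy, gsm, gfun_of_lt_neg_one this]
      simp

lemma measurable_X_sigmaUpTo {Ω : Type} (X : ℕ → Ω → ℝ) {j k : ℕ} (h1 : 1 ≤ j) (h2 : j ≤ k) :
    Measurable[sigmaUpTo X k] (X j) := by
  have : MeasurableSpace.comap (X j) inferInstance ≤ sigmaUpTo X k := by
    unfold sigmaUpTo
    exact le_iSup₂ (f := fun j _ => MeasurableSpace.comap (X j) inferInstance) j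
      (Finset.mem_Icc.mpr ⟨h1, h2⟩)
  exact fun s hs => this _ ⟨s, hs, rfl⟩

lemma sigmaUpTo_mono {Ω : Type} (X : ℕ → Ω → ℝ) {k l : ℕ} (hkl : k ≤ l) :
    sigmaUpTo X k ≤ sigmaUpTo X l := by
  refine iSup_le fun j => iSup_le fun hj => ?_
  unfold sigmaUpTo
  refine le_iSup₂ (f := fun j _ => MeasurableSpace.comap (X j) inferInstance) j ?_
  rw [Finset.mem_Icc] at hj ⊢
  exact ⟨hj.1, hj.2.trans hkl⟩

lemma sigmaUpTo_le {Ω : Type} {m0 : MeasurableSpace Ω} {X : ℕ → Ω → ℝ}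
    (hX : ∀ j, Measurable (X j)) (k : ℕ) : sigmaUpTo X k ≤ m0 :=
  iSup_le fun j => iSup_le fun _ => (hX j).comap_le

lemma ae_le_const_of_forall_setIntegral_le {Ω : Type} [m : MeasurableSpace Ω]
    (μ : Measure Ω) [IsFiniteMeasure μ] {W : Ω → ℝ} (hW : Integrable W μ) {C : ℝ}
    (h : ∀ s : Set Ω, MeasurableSet s → μ s < ⊤ → ∫ ω in s, W ω ∂μ ≤ C * (μ s).toReal) :
    W ≤ᵐ[μ] fun _ => C := by
  refine ae_le_of_forall_setIntegral_le hW (integrable_const C) fun s hs hμs => ?_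
  rw [setIntegral_const, smul_eq_mul, mul_comm]
  exact h s hs hμs

end Aux

set_option maxHeartbeats 2000000 in
/-- **Conditional variance bound for the smoothing error of the score**: with
`ξ̃_{i,k+1}(τ) = F_i(Y_{i,k}(τ)) − 1{X_{i,k+1} ≤ Y_{i,k}(τ)}` and
`ξ_{i,k+1}(τ) = Z_{i,k+1}(τ) − E(Z_{i,k+1}(τ) | F_{i,k})`,
`Z_{i,k+1}(τ) = τ − g_{aγ_k}(Y_{i,k}(τ) − X_{i,k+1})`, for every `1 ≤ i ≤ p`,
`τ ∈ [τ0, τ1]` and `k ≥ 1`, almost surely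
`E[ (ξ̃_{i,k+1}(τ) − ξ_{i,k+1}(τ))² | F_{i,k} ] ≤ 4 c_f a γ_k`. -/
theorem smoothed_sgd_conditional_variance_bound
    (τ0 τ1 cγ β a cf : ℝ)
    (hτ0 : 0 < τ0) (hτ01 : τ0 < τ1) (hτ1 : τ1 < 1)
    (hcγ : 0 < cγ) (hβ1 : 1 / 2 < β) (hβ2 : β < 1) (ha : 1 / 2 < a) (hcf : 0 < cf)
    (p : ℕ) (Ω : Type) [MeasurableSpace Ω] (μ : Measure Ω) [IsProbabilityMeasure μ]
    (X : ℕ → ℕ → Ω → ℝ) (F f : ℕ → ℝ → ℝ) (y : ℕ → ℝ) (Y : ℕ → ℕ → ℝ → Ω → ℝ)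
    (hXmeas : ∀ i k, Measurable (X i k))
    -- the X_{i,k}, k ≥ 1, are independent and identically distributed
    (hindep : ∀ i, iIndepFun (fun k => X i k) μ)
    (hident : ∀ i k, 1 ≤ k → Measure.map (X i k) μ = Measure.map (X i 1) μ)
    -- F_i is the cdf of X_{i,1}
    (hcdf : ∀ i x, F i x = (μ {ω | X i 1 ω ≤ x}).toReal)
    -- X_{i,1} has density f_i bounded by c_f
    (hdens : ∀ i, Measure.map (X i 1) μ =
      MeasureTheory.volume.withDensity (fun x => ENNReal.ofReal (f i x)))
    (hfbd : ∀ i x, |f i x| ≤ cf)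
    -- SGD iterates with deterministic initial value
    (hY1 : ∀ i τ ω, Y i 1 τ ω = y i)
    (hYrec : ∀ i k τ ω, 1 ≤ k → Y i (k + 1) τ ω =
      Y i k τ ω + gam cγ β k * (τ - gsm (a * gam cγ β k) (Y i k τ ω - X i (k + 1) ω)))
    (i k : ℕ) (hi1 : 1 ≤ i) (hip : i ≤ p) (hk : 1 ≤ k)
    (τ : ℝ) (hτl : τ0 ≤ τ) (hτu : τ ≤ τ1) :
    ∀ᵐ ω ∂μ,
      (μ[fun ω' =>
          ((F i (Y i k τ ω') - (if X i (k + 1) ω' ≤ Y i k τ ω' then (1 : ℝ) else 0)) -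
            ((τ - gsm (a * gam cγ β k) (Y i k τ ω' - X i (k + 1) ω')) -
              (μ[fun ω'' => τ - gsm (a * gam cγ β k) (Y i k τ ω'' - X i (k + 1) ω'') |
                  sigmaUpTo (X i) k]) ω')) ^ 2 |
          sigmaUpTo (X i) k]) ω ≤ 4 * cf * a * gam cγ β k := by
  classical
  -- basic setup
  have hm : sigmaUpTo (X i) k ≤ ‹MeasurableSpace Ω› := sigmaUpTo_le (hXmeas i) k
  haveI hσ : SigmaFinite (μ.trim hm) := by infer_instance
  have hγpos : 0 < gam cγ β k :=
    mul_pos hcγ (Real.rpow_pos_of_pos (by exact_mod_cast Nat.lt_of_lt_of_le Nat.zero_lt_one hk) _)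
  have ha0 : 0 < a := lt_trans (by norm_num) ha
  set h0 : ℝ := a * gam cγ β k with hh0def
  have hhpos : 0 < h0 := mul_pos ha0 hγpos
  let Yk : Ω → ℝ := fun ω => Y i k τ ω
  let Xk : Ω → ℝ := X i (k + 1)
  have hXk : Measurable Xk := hXmeas i (k + 1)
  let ν : Measure ℝ := μ.map Xk
  haveI : IsProbabilityMeasure ν := Measure.isProbabilityMeasure_map hXk.aemeasurable
  -- Y is measurable wrt the past
  have hYm : Measurable[sigmaUpTo (X i) k] Yk := by
    have key : ∀ n, 1 ≤ n → Measurable[sigmaUpTo (X i) n] (fun ω => Y i n τ ω) := by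
      intro n hn
      induction n, hn using Nat.le_induction with
      | base =>
        have : (fun ω => Y i 1 τ ω) = fun _ => y i := funext fun ω => hY1 i τ ω
        rw [this]; exact measurable_const
      | succ n hn ih =>
        have hrec : (fun ω => Y i (n + 1) τ ω) = fun ω =>
            Y i n τ ω + gam cγ β n * (τ - gsm (a * gam cγ β n) (Y i n τ ω - X i (n + 1) ω)) :=
          funext fun ω => hYrec i n τ ω hn
        rw [hrec]
        have hYn : Measurable[sigmaUpTo (X i) (n + 1)] (fun ω => Y i n τ ω) :=
          ih.mono (sigmaUpTo_mono _ (Nat.le_succ n)) le_rfl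
        have hXn : Measurable[sigmaUpTo (X i) (n + 1)] (X i (n + 1)) :=
          measurable_X_sigmaUpTo _ (by omega) le_rfl
        exact hYn.add ((((measurable_gsm _).comp (hYn.sub hXn)).const_sub τ).const_mul _)
    exact key k hk
  have hYamb : Measurable Yk := hYm.mono hm le_rfl
  -- independence of the past and X_{k+1}
  have hIndep : Indep (sigmaUpTo (X i) k) (MeasurableSpace.comap Xk inferInstance) μ := by
    have h1 : iIndep (fun n => MeasurableSpace.comap (X i n) inferInstance) μ := hindep i
    have h2 := ProbabilityTheory.indep_biSup_compl (fun n => (hXmeas i n).comap_le) h1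
        ↑(Finset.Icc 1 k)
    have hle1 : sigmaUpTo (X i) k ≤ ⨆ n ∈ (↑(Finset.Icc 1 k) : Set ℕ),
        MeasurableSpace.comap (X i n) inferInstance := by
      refine iSup_le fun j => iSup_le fun hj => ?_
      exact le_iSup₂ (f := fun (n : ℕ) (_ : n ∈ (↑(Finset.Icc 1 k) : Set ℕ)) =>
        MeasurableSpace.comap (X i n) inferInstance) j (Finset.mem_coe.mpr hj)
    have hle2 : MeasurableSpace.comap Xk inferInstance ≤
        ⨆ n ∈ (↑(Finset.Icc 1 k) : Set ℕ)ᶜ, MeasurableSpace.comap (X i n) inferInstance :=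
      le_iSup₂ (f := fun (n : ℕ) (_ : n ∈ (↑(Finset.Icc 1 k) : Set ℕ)ᶜ) =>
        MeasurableSpace.comap (X i n) inferInstance) (k + 1)
        (by simp [Finset.mem_Icc])
    exact indep_of_indep_of_le_right (indep_of_indep_of_le_left h2 hle1) hle2
  -- key disintegration identity
  have keyE : ∀ ψ : ℝ → ℝ → ℝ, Measurable (Function.uncurry ψ) →
      (∀ yv x, |ψ yv x| ≤ 1) → ∀ A : Set Ω, MeasurableSet[sigmaUpTo (X i) k] A →
      ∫ ω in A, ψ (Yk ω) (Xk ω) ∂μ = ∫ ω in A, (∫ x, ψ (Yk ω) x ∂ν) ∂μ := by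
    intro ψ hψ hψbd A hA
    have hA' : MeasurableSet A := hm A hA
    let T : Ω → ℝ × ℝ := fun ω => (Set.indicator A (fun _ => (1:ℝ)) ω, Yk ω)
    have hTm : Measurable[sigmaUpTo (X i) k] T :=
      ((measurable_const.indicator hA)).prodMk hYm
    have hTa : Measurable T := hTm.mono hm le_rfl
    haveI : IsProbabilityMeasure (μ.map T) := Measure.isProbabilityMeasure_map hTa.aemeasurable
    have hIF : IndepFun T Xk μ := indep_of_indep_of_le_left hIndep hTm.comap_le
    have hmap : μ.map (fun ω => (T ω, Xk ω)) = (μ.map T).prod ν :=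
      (indepFun_iff_map_prod_eq_prod_map_map hTa.aemeasurable hXk.aemeasurable).mp hIF
    let G : (ℝ × ℝ) × ℝ → ℝ := fun q => q.1.1 * ψ q.1.2 q.2
    have hG : Measurable G :=
      (measurable_fst.comp measurable_fst).mul
        (hψ.comp ((measurable_snd.comp measurable_fst).prodMk measurable_snd))
    have hGbd : ∀ᵐ q ∂((μ.map T).prod ν), ‖G q‖ ≤ 1 := by
      rw [← hmap]
      have hset : MeasurableSet {q : (ℝ × ℝ) × ℝ | ‖G q‖ ≤ 1} :=
        measurableSet_le hG.norm measurable_const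
      rw [ae_map_iff (hTa.prodMk hXk).aemeasurable hset]
      refine Filter.Eventually.of_forall fun ω => ?_
      show ‖Set.indicator A (fun _ => (1:ℝ)) ω * ψ (Yk ω) (Xk ω)‖ ≤ 1
      rw [norm_mul]
      by_cases hω : ω ∈ A
      · rw [Set.indicator_of_mem hω]
        simpa [Real.norm_eq_abs] using hψbd (Yk ω) (Xk ω)
      · rw [Set.indicator_of_notMem hω]; simp
    have hGint : Integrable G ((μ.map T).prod ν) :=
      ⟨hG.aestronglyMeasurable, HasFiniteIntegral.of_bounded hGbd⟩
    have hΨsm : StronglyMeasurable (fun yv => ∫ x, ψ yv x ∂ν) :=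
      hψ.stronglyMeasurable.integral_prod_right'
    calc ∫ ω in A, ψ (Yk ω) (Xk ω) ∂μ
        = ∫ ω, Set.indicator A (fun ω' => ψ (Yk ω') (Xk ω')) ω ∂μ := (integral_indicator hA').symm
      _ = ∫ ω, G (T ω, Xk ω) ∂μ := by
          refine integral_congr_ae (Filter.Eventually.of_forall fun ω => ?_)
          show Set.indicator A _ ω = Set.indicator A (fun _ => (1:ℝ)) ω * ψ (Yk ω) (Xk ω)
          by_cases hω : ω ∈ A <;>
            simp [Set.indicator_of_mem, Set.indicator_of_notMem, hω]
      _ = ∫ q, G q ∂(μ.map fun ω => (T ω, Xk ω)) :=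
          (integral_map (hTa.prodMk hXk).aemeasurable hG.aestronglyMeasurable).symm
      _ = ∫ q, G q ∂((μ.map T).prod ν) := by rw [hmap]
      _ = ∫ t, ∫ x, G (t, x) ∂ν ∂(μ.map T) := integral_prod G hGint
      _ = ∫ t, t.1 * ∫ x, ψ t.2 x ∂ν ∂(μ.map T) := by
          refine integral_congr_ae (Filter.Eventually.of_forall fun t => ?_)
          show ∫ x, t.1 * ψ t.2 x ∂ν = t.1 * ∫ x, ψ t.2 x ∂ν
          exact integral_const_mul _ _
      _ = ∫ ω, (T ω).1 * ∫ x, ψ (T ω).2 x ∂ν ∂μ :=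
          integral_map hTa.aemeasurable
            ((measurable_fst.mul (hΨsm.measurable.comp measurable_snd)).aestronglyMeasurable)
      _ = ∫ ω, Set.indicator A (fun ω' => ∫ x, ψ (Yk ω') x ∂ν) ω ∂μ := by
          refine integral_congr_ae (Filter.Eventually.of_forall fun ω => ?_)
          show Set.indicator A (fun _ => (1:ℝ)) ω * _ = _
          by_cases hω : ω ∈ A <;>
            simp [Set.indicator_of_mem, Set.indicator_of_notMem, hω, T]
      _ = ∫ ω in A, (∫ x, ψ (Yk ω) x ∂ν) ∂μ := integral_indicator hA'
  -- the random variables of interest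
  let U : Ω → ℝ := fun ω => if Xk ω ≤ Yk ω then 1 else 0
  let Gh : Ω → ℝ := fun ω => gsm h0 (Yk ω - Xk ω)
  let Z : Ω → ℝ := fun ω => τ - Gh ω
  let V : Ω → ℝ := fun ω => U ω - Gh ω
  have hUmeas : Measurable U :=
    Measurable.ite (measurableSet_le hXk hYamb) measurable_const measurable_const
  have hGhmeas : Measurable Gh := (measurable_gsm h0).comp (hYamb.sub hXk)
  have hVmeas : Measurable V := hUmeas.sub hGhmeas
  have hZmeas : Measurable Z := hGhmeas.const_sub τ
  have hU01 : ∀ ω, 0 ≤ U ω ∧ U ω ≤ 1 := by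
    intro ω
    show 0 ≤ (if Xk ω ≤ Yk ω then (1:ℝ) else 0) ∧ (if Xk ω ≤ Yk ω then (1:ℝ) else 0) ≤ 1
    split <;> norm_num
  have hGh01 : ∀ ω, 0 ≤ Gh ω ∧ Gh ω ≤ 1 := fun ω => ⟨gsm_nonneg _ _, gsm_le_one _ _⟩
  have hVbd : ∀ ω, |V ω| ≤ 1 := by
    intro ω
    have h1 := hU01 ω; have h2 := hGh01 ω
    rw [abs_le]
    constructor
    · show -1 ≤ U ω - Gh ω; linarith [h1.1, h2.2]
    · show U ω - Gh ω ≤ 1; linarith [h1.2, h2.1]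
  have intBdd : ∀ g : Ω → ℝ, AEStronglyMeasurable g μ → (∀ ω, |g ω| ≤ 1) → Integrable g μ :=
    fun g hgm hgb => ⟨hgm, HasFiniteIntegral.of_bounded (C := 1)
      (Filter.Eventually.of_forall fun ω => by rw [Real.norm_eq_abs]; exact hgb ω)⟩
  have hUint : Integrable U μ := intBdd U hUmeas.aestronglyMeasurable
    (fun ω => abs_le.mpr ⟨by linarith [(hU01 ω).1], (hU01 ω).2⟩)
  have hGhint : Integrable Gh μ := intBdd Gh hGhmeas.aestronglyMeasurable
    (fun ω => abs_le.mpr ⟨by linarith [(hGh01 ω).1], (hGh01 ω).2⟩)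
  have hVint : Integrable V μ := intBdd V hVmeas.aestronglyMeasurable hVbd
  have hVabsint : Integrable (fun ω => |V ω|) μ := hVint.abs
  -- the cdf
  have hFmono : Monotone (F i) := by
    intro s t hst
    rw [hcdf, hcdf]
    exact ENNReal.toReal_mono (measure_ne_top μ _)
      (measure_mono fun ω hω => le_trans hω hst)
  have hFmeas : Measurable (F i) := hFmono.measurable
  have hF01 : ∀ x, 0 ≤ F i x ∧ F i x ≤ 1 := by
    intro x
    rw [hcdf]
    refine ⟨ENNReal.toReal_nonneg, ?_⟩
    exact ENNReal.toReal_le_of_le_ofReal zero_le_one (by simpa using prob_le_one)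
  -- inner integrals
  have hν1 : ∀ yv : ℝ, ∫ x, (if x ≤ yv then (1:ℝ) else 0) ∂ν = F i yv := by
    intro yv
    have h1 : (fun x => if x ≤ yv then (1:ℝ) else 0)
        = Set.indicator (Set.Iic yv) (fun _ => (1:ℝ)) := by
      funext x
      by_cases hx : x ≤ yv <;> simp [Set.indicator, Set.mem_Iic, hx]
    rw [h1, integral_indicator_const _ measurableSet_Iic, smul_eq_mul, mul_one]
    have h2 : ν (Set.Iic yv) = μ {ω | X i 1 ω ≤ yv} := by
      show (μ.map Xk) _ = _
      rw [hident i (k + 1) (by omega), Measure.map_apply (hXmeas i 1) measurableSet_Iic]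
      rfl
    rw [measureReal_def, h2, hcdf i yv]
  have hν2 : ∀ yv : ℝ,
      ∫ x, |(if x ≤ yv then (1:ℝ) else 0) - gsm h0 (yv - x)| ∂ν ≤ 2 * cf * h0 := by
    intro yv
    have hφm : Measurable fun x => |(if x ≤ yv then (1:ℝ) else 0) - gsm h0 (yv - x)| :=
      ((Measurable.ite (measurableSet_le measurable_id measurable_const) measurable_const
        measurable_const).sub ((measurable_gsm h0).comp (measurable_const.sub measurable_id))).abs
    have hint1 : Integrable (fun x => |(if x ≤ yv then (1:ℝ) else 0) - gsm h0 (yv - x)|) ν := by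
      refine ⟨hφm.aestronglyMeasurable, HasFiniteIntegral.of_bounded (C := 2)
        (Filter.Eventually.of_forall fun x => ?_)⟩
      rw [Real.norm_eq_abs, abs_abs, abs_sub_le_iff]
      have := gsm_nonneg h0 (yv - x); have := gsm_le_one h0 (yv - x)
      constructor <;> split <;> norm_num <;> linarith
    have hint2 : Integrable (Set.indicator (Set.Icc (yv - h0) (yv + h0)) fun _ => (1:ℝ)) ν :=
      (integrable_const (1:ℝ)).indicator measurableSet_Icc
    have hmono := integral_mono hint1 hint2 (fun x => smoothing_diff_abs_le hhpos)
    have hval : ∫ x, Set.indicator (Set.Icc (yv - h0) (yv + h0)) (fun _ => (1:ℝ)) x ∂ν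
        = (ν (Set.Icc (yv - h0) (yv + h0))).toReal := by
      rw [integral_indicator_const _ measurableSet_Icc, smul_eq_mul, mul_one, measureReal_def]
    have hmeasIcc : ν (Set.Icc (yv - h0) (yv + h0)) ≤ ENNReal.ofReal (cf * (2 * h0)) := by
      have hmapν : ν = MeasureTheory.volume.withDensity fun x => ENNReal.ofReal (f i x) := by
        show μ.map Xk = _
        rw [hident i (k + 1) (by omega), hdens i]
      rw [hmapν, withDensity_apply _ measurableSet_Icc]
      calc ∫⁻ x in Set.Icc (yv - h0) (yv + h0), ENNReal.ofReal (f i x) ∂volume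
          ≤ ∫⁻ _ in Set.Icc (yv - h0) (yv + h0), ENNReal.ofReal cf ∂volume :=
            lintegral_mono fun x => ENNReal.ofReal_le_ofReal ((le_abs_self _).trans (hfbd i x))
        _ = ENNReal.ofReal cf * volume (Set.Icc (yv - h0) (yv + h0)) := by
            rw [setLIntegral_const]
        _ = ENNReal.ofReal cf * ENNReal.ofReal (2 * h0) := by
            rw [Real.volume_Icc]; congr 1; ring
        _ = ENNReal.ofReal (cf * (2 * h0)) := (ENNReal.ofReal_mul hcf.le).symm
    have htr : (ν (Set.Icc (yv - h0) (yv + h0))).toReal ≤ cf * (2 * h0) :=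
      ENNReal.toReal_le_of_le_ofReal (by positivity) hmeasIcc
    calc ∫ x, |(if x ≤ yv then (1:ℝ) else 0) - gsm h0 (yv - x)| ∂ν
        ≤ (ν (Set.Icc (yv - h0) (yv + h0))).toReal := by rw [← hval]; exact hmono
      _ ≤ cf * (2 * h0) := htr
      _ = 2 * cf * h0 := by ring
  -- F i (Yk) is a version of the conditional expectation of U
  have hFY_sm : StronglyMeasurable[sigmaUpTo (X i) k] fun ω => F i (Yk ω) :=
    (hFmeas.comp hYm).stronglyMeasurable
  have hFYint : Integrable (fun ω => F i (Yk ω)) μ :=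
    intBdd _ (hFmeas.comp hYamb).aestronglyMeasurable
      (fun ω => abs_le.mpr ⟨by linarith [(hF01 (Yk ω)).1], (hF01 (Yk ω)).2⟩)
  have hψ1m : Measurable (Function.uncurry fun yv x : ℝ => if x ≤ yv then (1:ℝ) else 0) := by
    show Measurable fun q : ℝ × ℝ => if q.2 ≤ q.1 then (1:ℝ) else 0
    exact Measurable.ite (measurableSet_le measurable_snd measurable_fst)
      measurable_const measurable_const
  have hcondU : (fun ω => F i (Yk ω)) =ᵐ[μ] μ[U|sigmaUpTo (X i) k] := by
    refine ae_eq_condExp_of_forall_setIntegral_eq hm hUint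
      (fun s _ _ => hFYint.integrableOn) (fun s hs _ => ?_)
      hFY_sm.aestronglyMeasurable
    have h1 := keyE (fun yv x => if x ≤ yv then (1:ℝ) else 0) hψ1m
      (fun yv x => by show |if x ≤ yv then (1:ℝ) else 0| ≤ 1; split <;> norm_num) s hs
    calc ∫ ω in s, F i (Yk ω) ∂μ
        = ∫ ω in s, (∫ x, (if x ≤ Yk ω then (1:ℝ) else 0) ∂ν) ∂μ := by
          refine integral_congr_ae (Filter.Eventually.of_forall fun ω => ?_)
          exact (hν1 (Yk ω)).symm
      _ = ∫ ω in s, U ω ∂μ := h1.symm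
  -- set-integral bound for |V|
  have hψ2m : Measurable
      (Function.uncurry fun yv x : ℝ => |(if x ≤ yv then (1:ℝ) else 0) - gsm h0 (yv - x)|) := by
    show Measurable fun q : ℝ × ℝ => |(if q.2 ≤ q.1 then (1:ℝ) else 0) - gsm h0 (q.1 - q.2)|
    exact ((Measurable.ite (measurableSet_le measurable_snd measurable_fst) measurable_const
      measurable_const).sub ((measurable_gsm h0).comp (measurable_fst.sub measurable_snd))).abs
  have hψ2bd : ∀ yv x : ℝ, |(|(if x ≤ yv then (1:ℝ) else 0) - gsm h0 (yv - x)|)| ≤ 1 := by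
    intro yv x
    rw [abs_abs, abs_sub_le_iff]
    have := gsm_nonneg h0 (yv - x); have := gsm_le_one h0 (yv - x)
    constructor <;> split <;> norm_num <;> linarith
  have hΨ2sm : StronglyMeasurable fun yv =>
      ∫ x, |(if x ≤ yv then (1:ℝ) else 0) - gsm h0 (yv - x)| ∂ν :=
    hψ2m.stronglyMeasurable.integral_prod_right'
  have hsetV : ∀ A : Set Ω, MeasurableSet[sigmaUpTo (X i) k] A →
      ∫ ω in A, |V ω| ∂μ ≤ 2 * cf * h0 * (μ A).toReal := by
    intro A hA
    have h1 := keyE (fun yv x => |(if x ≤ yv then (1:ℝ) else 0) - gsm h0 (yv - x)|)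
      hψ2m hψ2bd A hA
    have h2 : ∫ ω in A, |V ω| ∂μ
        = ∫ ω in A, (∫ x, |(if x ≤ Yk ω then (1:ℝ) else 0) - gsm h0 (Yk ω - x)| ∂ν) ∂μ := h1
    rw [h2]
    have hintΨ : Integrable (fun ω =>
        ∫ x, |(if x ≤ Yk ω then (1:ℝ) else 0) - gsm h0 (Yk ω - x)| ∂ν) μ := by
      refine intBdd _ (hΨ2sm.measurable.comp hYamb).aestronglyMeasurable fun ω => ?_
      rw [abs_le]
      constructor
      · refine le_trans (by norm_num) (integral_nonneg fun x => abs_nonneg _)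
      · calc ∫ x, |(if x ≤ Yk ω then (1:ℝ) else 0) - gsm h0 (Yk ω - x)| ∂ν
            ≤ ∫ _x, (1:ℝ) ∂ν := by
              refine integral_mono ?_ (integrable_const 1) fun x => ?_
              · have hcomp : Measurable fun x : ℝ =>
                    Function.uncurry (fun yv x : ℝ => |(if x ≤ yv then (1:ℝ) else 0) -
                      gsm h0 (yv - x)|) (Yk ω, x) :=
                  hψ2m.comp ((measurable_const (a := Yk ω)).prodMk measurable_id)
                refine ⟨hcomp.aestronglyMeasurable,
                  HasFiniteIntegral.of_bounded (C := 1)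
                    (Filter.Eventually.of_forall fun x => ?_)⟩
                rw [Real.norm_eq_abs]; exact hψ2bd (Yk ω) x
              · have h3 := hψ2bd (Yk ω) x
                rw [abs_abs] at h3
                exact h3
          _ = 1 := by simp
    calc ∫ ω in A, (∫ x, |(if x ≤ Yk ω then (1:ℝ) else 0) - gsm h0 (Yk ω - x)| ∂ν) ∂μ
        ≤ ∫ _ω in A, 2 * cf * h0 ∂μ :=
          setIntegral_mono hintΨ.integrableOn (integrable_const _).integrableOn
            fun ω => hν2 (Yk ω)
      _ = 2 * cf * h0 * (μ A).toReal := by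
          rw [setIntegral_const, smul_eq_mul, mul_comm, measureReal_def]
  -- conditional expectation of |V| is bounded
  have hWle : μ[(fun ω => |V ω|)|sigmaUpTo (X i) k] ≤ᵐ[μ] fun _ => 2 * cf * h0 := by
    have hW_sm : StronglyMeasurable[sigmaUpTo (X i) k]
        (μ[(fun ω => |V ω|)|sigmaUpTo (X i) k]) := stronglyMeasurable_condExp
    refine ae_le_of_ae_le_trim (hm := hm) ?_
    refine ae_le_const_of_forall_setIntegral_le (m := sigmaUpTo (X i) k) (μ.trim hm)
      (Integrable.trim hm integrable_condExp hW_sm) fun s hs _ => ?_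
    calc ∫ ω in s, (μ[(fun ω' => |V ω'|)|sigmaUpTo (X i) k]) ω ∂(μ.trim hm)
        = ∫ ω in s, (μ[(fun ω' => |V ω'|)|sigmaUpTo (X i) k]) ω ∂μ :=
          (setIntegral_trim hm hW_sm hs).symm
      _ = ∫ ω in s, |V ω| ∂μ := setIntegral_condExp hm hVabsint hs
      _ ≤ 2 * cf * h0 * (μ s).toReal := hsetV s hs
      _ = 2 * cf * h0 * ((μ.trim hm) s).toReal := by
          rw [trim_measurableSet_eq hm hs]
  -- conditional expectation of V
  let E0 : Ω → ℝ := μ[V|sigmaUpTo (X i) k]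
  have hE0_sm : StronglyMeasurable[sigmaUpTo (X i) k] E0 := stronglyMeasurable_condExp
  have hE0_amb : StronglyMeasurable E0 := hE0_sm.mono hm
  have hE0bd : ∀ᵐ ω ∂μ, |E0 ω| ≤ 1 := by
    have hup : E0 ≤ᵐ[μ] μ[(fun _ => (1:ℝ))|sigmaUpTo (X i) k] :=
      condExp_mono hVint (integrable_const 1)
        (Filter.Eventually.of_forall fun ω => (abs_le.mp (hVbd ω)).2)
    have hlo : μ[(fun _ => (-1:ℝ))|sigmaUpTo (X i) k] ≤ᵐ[μ] E0 :=
      condExp_mono (integrable_const (-1)) hVint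
        (Filter.Eventually.of_forall fun ω => (abs_le.mp (hVbd ω)).1)
    rw [condExp_const hm] at hup hlo
    filter_upwards [hup, hlo] with ω h1 h2
    exact abs_le.mpr ⟨h2, h1⟩
  -- integrability of the auxiliary products
  let VV : Ω → ℝ := fun ω => V ω * V ω
  let EV : Ω → ℝ := fun ω => (2 * E0 ω) * V ω
  let EE : Ω → ℝ := fun ω => E0 ω * E0 ω
  have hVVint : Integrable VV μ := by
    refine ⟨(hVmeas.mul hVmeas).aestronglyMeasurable, HasFiniteIntegral.of_bounded (C := 1)
      (Filter.Eventually.of_forall fun ω => ?_)⟩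
    have := hVbd ω
    rw [Real.norm_eq_abs, abs_mul]
    nlinarith [abs_nonneg (V ω)]
  have hEVint : Integrable EV μ := by
    refine ⟨((measurable_const.mul hE0_amb.measurable).mul hVmeas).aestronglyMeasurable,
      HasFiniteIntegral.of_bounded (C := 2) ?_⟩
    filter_upwards [hE0bd] with ω h1
    have := hVbd ω
    rw [Real.norm_eq_abs, abs_mul, abs_mul, abs_two]
    nlinarith [abs_nonneg (E0 ω), abs_nonneg (V ω)]
  have hEEint : Integrable EE μ := by
    refine ⟨(hE0_amb.mul hE0_amb).aestronglyMeasurable,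
      HasFiniteIntegral.of_bounded (C := 1) ?_⟩
    filter_upwards [hE0bd] with ω h1
    rw [Real.norm_eq_abs, abs_mul]
    nlinarith [abs_nonneg (E0 ω)]
  have hf1int : Integrable (VV - EV) μ := hVVint.sub hEVint
  -- conditional expectation computations
  have hmulc : μ[EV|sigmaUpTo (X i) k] =ᵐ[μ] (fun ω => 2 * E0 ω) * μ[V|sigmaUpTo (X i) k] :=
    condExp_mul_of_stronglyMeasurable_left (stronglyMeasurable_const.mul hE0_sm) hEVint hVint
  have hsq : μ[EE|sigmaUpTo (X i) k] = EE :=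
    condExp_of_stronglyMeasurable hm (hE0_sm.mul hE0_sm) hEEint
  have hc1 : μ[(VV - EV) + EE|sigmaUpTo (X i) k]
      =ᵐ[μ] μ[VV - EV|sigmaUpTo (X i) k] + μ[EE|sigmaUpTo (X i) k] :=
    condExp_add hf1int hEEint _
  have hc2 : μ[VV - EV|sigmaUpTo (X i) k]
      =ᵐ[μ] μ[VV|sigmaUpTo (X i) k] - μ[EV|sigmaUpTo (X i) k] :=
    condExp_sub hVVint hEVint _
  have hVV_le : μ[VV|sigmaUpTo (X i) k] ≤ᵐ[μ] μ[(fun ω => |V ω|)|sigmaUpTo (X i) k] := by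
    refine condExp_mono hVVint hVabsint (Filter.Eventually.of_forall fun ω => ?_)
    calc V ω * V ω = |V ω| * |V ω| := (abs_mul_abs_self _).symm
      _ ≤ |V ω| * 1 := mul_le_mul_of_nonneg_left (hVbd ω) (abs_nonneg _)
      _ = |V ω| := mul_one _
  -- the chain for the centered square
  have hchain : ∀ᵐ ω ∂μ,
      (μ[(fun ω' => (V ω' - E0 ω') * (V ω' - E0 ω'))|sigmaUpTo (X i) k]) ω ≤ 2 * cf * h0 := by
    have hsum : (fun ω' => (V ω' - E0 ω') * (V ω' - E0 ω')) = (VV - EV) + EE := by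
      funext ω
      show (V ω - E0 ω) * (V ω - E0 ω) = (VV ω - EV ω) + EE ω
      show _ = (V ω * V ω - (2 * E0 ω) * V ω) + E0 ω * E0 ω
      ring
    rw [hsum]
    filter_upwards [hc1, hc2, hmulc, hVV_le, hWle] with ω e1 e2 e3 e4 e5
    rw [Pi.add_apply] at e1
    rw [Pi.sub_apply] at e2
    rw [Pi.mul_apply] at e3
    have e6 : (μ[EE|sigmaUpTo (X i) k]) ω = E0 ω * E0 ω := by rw [hsq]
    have e7 : (0:ℝ) ≤ E0 ω * E0 ω := mul_self_nonneg _
    nlinarith [e1, e2, e3, e4, e5, e6, e7]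
  -- conclusion
  have hEZ : ∀ᵐ ω ∂μ, (μ[Z|sigmaUpTo (X i) k]) ω = τ - (μ[Gh|sigmaUpTo (X i) k]) ω := by
    have h1 : μ[(fun _ => τ) - Gh|sigmaUpTo (X i) k]
        =ᵐ[μ] μ[(fun _ => τ)|sigmaUpTo (X i) k] - μ[Gh|sigmaUpTo (X i) k] :=
      condExp_sub (integrable_const τ) hGhint _
    rw [condExp_const hm] at h1
    have h2 : μ[Z|sigmaUpTo (X i) k] = μ[(fun _ => τ) - Gh|sigmaUpTo (X i) k] := rfl
    rw [h2]
    filter_upwards [h1] with ω e1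
    rw [e1, Pi.sub_apply]
  have hEV0 : ∀ᵐ ω ∂μ, E0 ω = (μ[U|sigmaUpTo (X i) k]) ω - (μ[Gh|sigmaUpTo (X i) k]) ω := by
    have h1 : μ[U - Gh|sigmaUpTo (X i) k]
        =ᵐ[μ] μ[U|sigmaUpTo (X i) k] - μ[Gh|sigmaUpTo (X i) k] := condExp_sub hUint hGhint _
    have h2 : E0 = μ[U - Gh|sigmaUpTo (X i) k] := rfl
    rw [h2]
    filter_upwards [h1] with ω e1
    rw [e1, Pi.sub_apply]
  have hDeq : (fun ω => ((F i (Yk ω) - U ω) - (Z ω - (μ[Z|sigmaUpTo (X i) k]) ω))^2)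
      =ᵐ[μ] fun ω' => (V ω' - E0 ω') * (V ω' - E0 ω') := by
    filter_upwards [hEZ, hcondU, hEV0] with ω e1 e2 e3
    show ((F i (Yk ω) - U ω) - ((τ - Gh ω) - (μ[Z|sigmaUpTo (X i) k]) ω))^2
        = ((U ω - Gh ω) - E0 ω) * ((U ω - Gh ω) - E0 ω)
    rw [e1, e3, ← e2]
    ring
  have hcondD : μ[(fun ω => ((F i (Yk ω) - U ω) - (Z ω - (μ[Z|sigmaUpTo (X i) k]) ω))^2)|
        sigmaUpTo (X i) k]
      =ᵐ[μ] μ[(fun ω' => (V ω' - E0 ω') * (V ω' - E0 ω'))|sigmaUpTo (X i) k] :=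
    condExp_congr_ae hDeq
  have h2to4 : 2 * cf * h0 ≤ 4 * cf * a * gam cγ β k := by
    rw [hh0def]
    nlinarith [hγpos, ha0, hcf]
  have hmain : ∀ᵐ ω ∂μ,
      (μ[(fun ω => ((F i (Yk ω) - U ω) - (Z ω - (μ[Z|sigmaUpTo (X i) k]) ω))^2)|
        sigmaUpTo (X i) k]) ω ≤ 4 * cf * a * gam cγ β k := by
    filter_upwards [hcondD, hchain] with ω e1 e2
    calc (μ[(fun ω => ((F i (Yk ω) - U ω) - (Z ω - (μ[Z|sigmaUpTo (X i) k]) ω))^2)|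
            sigmaUpTo (X i) k]) ω
        = (μ[(fun ω' => (V ω' - E0 ω') * (V ω' - E0 ω'))|sigmaUpTo (X i) k]) ω := e1
      _ ≤ 2 * cf * h0 := e2
      _ ≤ 4 * cf * a * gam cγ β k := h2to4
  exact hmain
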